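/- Let M and N be right A-modules in C, and suppose the equalizer E of the pair δ'_N ⊗ id_{M^*} and id_N ⊗ δ_M : N ⊗ M^* ⟶ N ⊗ A^* ⊗ M^* exists, with equalizer inclusion e : E ⟶ N ⊗ M^*. Define the left A-action ▷_N : A ⊗ ᘁN ⟶ ᘁN as the composite (id_{ᘁN} ⊗ eval'_N) ∘ (id_{ᘁN} ⊗ ◁_N ⊗ id_{ᘁN}) ∘ (coev'_N ⊗ id_A ⊗ id_{ᘁN}), with associators inserted as needed. Then the right dual ᘁE, together with the composite M ⊗ ᘁN ≅ ᘁ(M^*) ⊗ ᘁN ≅ ᘁ(N ⊗ M^*) → ᘁE obtained from the canonical isomorphisms and the right-dual morphism ᘁe, is a coequalizer of the pair of morphisms id_M ⊗ ▷_N and ◁_M ⊗ id_{ᘁN} : M ⊗ A ⊗ ᘁN ⟶ M ⊗ ᘁN. -/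

import Mathlib

/-!
Let `C` be a rigid monoidal category, `A` a monoid object in `C`, and `M`, `N`
right `A`-modules.  Suppose the equalizer `E` of `δ'_N ⊗ id` and
`id ⊗ δ_M : N ⊗ Mᘁ ⟶ N ⊗ (Aᘁ ⊗ Mᘁ)` exists, with inclusion `e : E ⟶ N ⊗ Mᘁ`.
Endow `ᘁN` with the left `A`-action
`▷_N = (id ⊗ eval'_N) ∘ (id ⊗ act_N ⊗ id) ∘ (coev'_N ⊗ id ⊗ id)`.
Then `ᘁE`, together with the canonical composite `M ⊗ ᘁN ⟶ ᘁE` obtained from the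
canonical isomorphisms `M ⊗ ᘁN ≅ ᘁ(Mᘁ) ⊗ ᘁN ≅ ᘁ(N ⊗ Mᘁ)` and the right-dual
morphism `ᘁe`, is a coequalizer of `id_M ⊗ ▷_N` and `act_M ⊗ id_{ᘁN}`.

(Mathlib's right dual `Xᘁ` plays the role of the paper's left dual `X^*`, and
Mathlib's left dual `ᘁX`, with `ε_ (ᘁX) X : X ⊗ ᘁX ⟶ 𝟙` and
`η_ (ᘁX) X : 𝟙 ⟶ ᘁX ⊗ X`, is the paper's right dual.)
-/

open CategoryTheory MonoidalCategory CategoryTheory.Limits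

variable {C : Type*} [Category C] [MonoidalCategory C]

/-- A right module over a monoid object `A` in `C`. -/
structure RightMod (A : Mon C) where
  X : C
  act : X ⊗ A.X ⟶ X
  assoc : (act ▷ A.X) ≫ act = (α_ X A.X A.X).hom ≫ (X ◁ MonObj.mul (X := A.X)) ≫ act
  unit : (X ◁ MonObj.one (X := A.X)) ≫ act = (ρ_ X).hom

section

variable {A : Mon C} [RigidCategory C]

/-- `δ_M : Mᘁ ⟶ Aᘁ ⊗ Mᘁ`, the transpose of the right action of `A` on `M`,
composed with the canonical isomorphism `(M ⊗ A)ᘁ ≅ Aᘁ ⊗ Mᘁ`. -/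
noncomputable def deltaDual (M : RightMod A) : (M.X)ᘁ ⟶ A.Xᘁ ⊗ M.Xᘁ :=
  (ρ_ (M.Xᘁ)).inv ≫
    (M.Xᘁ ◁ (η_ M.X (M.Xᘁ) ≫
      (M.X ◁ ((λ_ (M.Xᘁ)).inv ≫ (η_ A.X (A.Xᘁ) ▷ M.Xᘁ) ≫ (α_ A.X (A.Xᘁ) (M.Xᘁ)).hom)) ≫
      (α_ M.X A.X (A.Xᘁ ⊗ M.Xᘁ)).inv)) ≫
    (M.Xᘁ ◁ (M.act ▷ (A.Xᘁ ⊗ M.Xᘁ))) ≫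
    (α_ (M.Xᘁ) M.X (A.Xᘁ ⊗ M.Xᘁ)).inv ≫
    (ε_ M.X (M.Xᘁ) ▷ (A.Xᘁ ⊗ M.Xᘁ)) ≫ (λ_ (A.Xᘁ ⊗ M.Xᘁ)).hom

/-- `δ'_N = (act_N ⊗ id_{Aᘁ}) ∘ (id_N ⊗ coev_A) : N ⟶ N ⊗ Aᘁ`. -/
noncomputable def deltaAct (N : RightMod A) : N.X ⟶ N.X ⊗ A.Xᘁ :=
  (ρ_ N.X).inv ≫ (N.X ◁ η_ A.X (A.Xᘁ)) ≫ (α_ N.X A.X (A.Xᘁ)).inv ≫ (N.act ▷ A.Xᘁ)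

/-- The left `A`-action on `ᘁN`:
`▷_N = (id ⊗ eval'_N) ∘ (id ⊗ act_N ⊗ id) ∘ (coev'_N ⊗ id ⊗ id) : A ⊗ ᘁN ⟶ ᘁN`. -/
noncomputable def leftActOnLeftDual (N : RightMod A) : A.X ⊗ (ᘁN.X : C) ⟶ (ᘁN.X : C) :=
  (λ_ (A.X ⊗ (ᘁN.X : C))).inv ≫ (η_ (ᘁN.X) N.X ▷ (A.X ⊗ (ᘁN.X : C))) ≫
    (α_ (ᘁN.X : C) N.X (A.X ⊗ (ᘁN.X : C))).hom ≫
    ((ᘁN.X : C) ◁ (α_ N.X A.X (ᘁN.X : C)).inv) ≫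
    ((ᘁN.X : C) ◁ (N.act ▷ (ᘁN.X : C))) ≫
    ((ᘁN.X : C) ◁ ε_ (ᘁN.X) N.X) ≫ (ρ_ (ᘁN.X : C)).hom

/-- The canonical evaluation `(N ⊗ Mᘁ) ⊗ (M ⊗ ᘁN) ⟶ 𝟙`, exhibiting `M ⊗ ᘁN` as a
left dual of `N ⊗ Mᘁ` via the canonical isomorphisms `M ≅ ᘁ(Mᘁ)` and
`ᘁ(Mᘁ) ⊗ ᘁN ≅ ᘁ(N ⊗ Mᘁ)`. -/
noncomputable def pairEval (M N : RightMod A) :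
    (N.X ⊗ M.Xᘁ) ⊗ (M.X ⊗ (ᘁN.X : C)) ⟶ 𝟙_ C :=
  (α_ N.X (M.Xᘁ) (M.X ⊗ (ᘁN.X : C))).hom ≫
    (N.X ◁ ((α_ (M.Xᘁ) M.X (ᘁN.X : C)).inv ≫ (ε_ M.X (M.Xᘁ) ▷ (ᘁN.X : C)) ≫
      (λ_ (ᘁN.X : C)).hom)) ≫ ε_ (ᘁN.X) N.X

/-- The canonical composite `M ⊗ ᘁN ≅ ᘁ(Mᘁ) ⊗ ᘁN ≅ ᘁ(N ⊗ Mᘁ) ⟶ ᘁE` obtained from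
the canonical isomorphisms and the right-dual (mate) of `e : E ⟶ N ⊗ Mᘁ`. -/
noncomputable def coforkMap (M N : RightMod A) {E : C} (e : E ⟶ N.X ⊗ M.Xᘁ) :
    M.X ⊗ (ᘁN.X : C) ⟶ (ᘁE : C) :=
  (λ_ (M.X ⊗ (ᘁN.X : C))).inv ≫ (η_ (ᘁE) E ▷ (M.X ⊗ (ᘁN.X : C))) ≫
    (α_ (ᘁE : C) E (M.X ⊗ (ᘁN.X : C))).hom ≫
    ((ᘁE : C) ◁ ((e ▷ (M.X ⊗ (ᘁN.X : C))) ≫ pairEval M N)) ≫ (ρ_ (ᘁE : C)).hom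

/-! ### Auxiliary machinery: tensor products of exact pairings and mates. -/

namespace LDEAux

open ExactPairing

variable {D : Type*} [Category D] [MonoidalCategory D]

/-- The tensor product of two exact pairings. -/
noncomputable def tensorPairing (P₁ Q₁ P₂ Q₂ : D) [ExactPairing P₁ Q₁] [ExactPairing P₂ Q₂] :
    ExactPairing (P₂ ⊗ P₁) (Q₁ ⊗ Q₂) where
  coevaluation' := η_ P₂ Q₂ ≫ (P₂ ◁ (λ_ Q₂).inv) ≫ (P₂ ◁ (η_ P₁ Q₁ ▷ Q₂)) ≫
    (P₂ ◁ (α_ P₁ Q₁ Q₂).hom) ≫ (α_ P₂ P₁ (Q₁ ⊗ Q₂)).inv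
  evaluation' := (α_ Q₁ Q₂ (P₂ ⊗ P₁)).hom ≫
    (Q₁ ◁ ((α_ Q₂ P₂ P₁).inv ≫ (ε_ P₂ Q₂ ▷ P₁) ≫ (λ_ P₁).hom)) ≫ ε_ P₁ Q₁
  coevaluation_evaluation' := by
    calc
      _ = 𝟙 _ ⊗≫ ((Q₁ ⊗ Q₂ : D)) ◁ η_ P₂ Q₂ ⊗≫
            Q₁ ◁ (((Q₂ ⊗ P₂ : D)) ◁ ((λ_ Q₂).inv ≫ η_ P₁ Q₁ ▷ Q₂) ≫
              ε_ P₂ Q₂ ▷ (((P₁ ⊗ Q₁) ⊗ Q₂ : D))) ⊗≫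
            ε_ P₁ Q₁ ▷ ((Q₁ ⊗ Q₂ : D)) ⊗≫ 𝟙 _ := by
        monoidal
      _ = 𝟙 _ ⊗≫ ((Q₁ ⊗ Q₂ : D)) ◁ η_ P₂ Q₂ ⊗≫
            Q₁ ◁ (ε_ P₂ Q₂ ▷ Q₂ ≫ 𝟙_ D ◁ ((λ_ Q₂).inv ≫ η_ P₁ Q₁ ▷ Q₂)) ⊗≫
            ε_ P₁ Q₁ ▷ ((Q₁ ⊗ Q₂ : D)) ⊗≫ 𝟙 _ := by
        rw [whisker_exchange]
      _ = 𝟙 _ ⊗≫ Q₁ ◁ (Q₂ ◁ η_ P₂ Q₂ ⊗≫ ε_ P₂ Q₂ ▷ Q₂) ⊗≫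
            (Q₁ ◁ η_ P₁ Q₁ ⊗≫ ε_ P₁ Q₁ ▷ Q₁) ▷ Q₂ ⊗≫ 𝟙 _ := by
        monoidal
      _ = _ := by
        rw [coevaluation_evaluation'', coevaluation_evaluation'']; monoidal
  evaluation_coevaluation' := by
    calc
      _ = 𝟙 _ ⊗≫ η_ P₂ Q₂ ▷ ((P₂ ⊗ P₁ : D)) ⊗≫
            P₂ ◁ (η_ P₁ Q₁ ▷ (((Q₂ ⊗ P₂) ⊗ P₁ : D)) ≫ ((P₁ ⊗ Q₁ : D)) ◁ (ε_ P₂ Q₂ ▷ P₁)) ⊗≫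
            P₂ ◁ (P₁ ◁ ε_ P₁ Q₁) ⊗≫ 𝟙 _ := by
        monoidal
      _ = 𝟙 _ ⊗≫ (η_ P₂ Q₂ ▷ P₂ ⊗≫ P₂ ◁ ε_ P₂ Q₂) ▷ P₁ ⊗≫
            P₂ ◁ (η_ P₁ Q₁ ▷ P₁ ⊗≫ P₁ ◁ ε_ P₁ Q₁) ⊗≫ 𝟙 _ := by
        rw [← whisker_exchange]; monoidal
      _ = _ := by
        rw [evaluation_coevaluation'', evaluation_coevaluation'']; monoidal

variable {P Q P' Q' : D}

/-- Transposition along an exact pairing, on the evaluation side. -/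
noncomputable def evEquiv (P : D) {Q : D} [ExactPairing P Q] (W : D) :
    (W ⟶ P) ≃ (Q ⊗ W ⟶ 𝟙_ D) where
  toFun v := (Q ◁ v) ≫ ε_ P Q
  invFun c := (λ_ W).inv ≫ (η_ P Q ▷ W) ≫ (α_ P Q W).hom ≫ (P ◁ c) ≫ (ρ_ P).hom
  left_inv v := by
    calc
      _ = 𝟙 _ ⊗≫ (η_ P Q ▷ W ≫ ((P ⊗ Q : D)) ◁ v) ⊗≫ P ◁ ε_ P Q ⊗≫ 𝟙 _ := by
        monoidal
      _ = v ⊗≫ (η_ P Q ▷ P ⊗≫ P ◁ ε_ P Q) ⊗≫ 𝟙 _ := by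
        rw [← whisker_exchange]; monoidal
      _ = v := by
        rw [evaluation_coevaluation'']; monoidal
  right_inv c := by
    calc
      _ = 𝟙 _ ⊗≫ Q ◁ η_ P Q ▷ W ⊗≫ (((Q ⊗ P : D)) ◁ c ≫ ε_ P Q ▷ 𝟙_ D) ⊗≫ 𝟙 _ := by
        monoidal
      _ = 𝟙 _ ⊗≫ (Q ◁ η_ P Q ⊗≫ ε_ P Q ▷ Q) ▷ W ⊗≫ c := by
        rw [whisker_exchange]; monoidal
      _ = c := by
        rw [coevaluation_evaluation'']; monoidal

/-- Transposition along an exact pairing, on the coevaluation side. -/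
noncomputable def coevEquiv (P : D) {Q : D} [ExactPairing P Q] (T : D) :
    (P ⟶ T) ≃ (𝟙_ D ⟶ T ⊗ Q) where
  toFun t := η_ P Q ≫ (t ▷ Q)
  invFun c := (λ_ P).inv ≫ (c ▷ P) ≫ (α_ T Q P).hom ≫ (T ◁ ε_ P Q) ≫ (ρ_ T).hom
  left_inv t := by
    calc
      _ = 𝟙 _ ⊗≫ η_ P Q ▷ P ⊗≫ (t ▷ ((Q ⊗ P : D)) ≫ T ◁ ε_ P Q) ⊗≫ 𝟙 _ := by
        monoidal
      _ = 𝟙 _ ⊗≫ (η_ P Q ▷ P ⊗≫ P ◁ ε_ P Q) ⊗≫ t := by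
        rw [← whisker_exchange]; monoidal
      _ = t := by
        rw [evaluation_coevaluation'']; monoidal
  right_inv c := by
    calc
      _ = 𝟙 _ ⊗≫ (𝟙_ D ◁ η_ P Q ≫ c ▷ ((P ⊗ Q : D))) ⊗≫ T ◁ ε_ P Q ▷ Q ⊗≫ 𝟙 _ := by
        monoidal
      _ = c ⊗≫ T ◁ (Q ◁ η_ P Q ⊗≫ ε_ P Q ▷ Q) ⊗≫ 𝟙 _ := by
        rw [whisker_exchange]; monoidal
      _ = c := by
        rw [coevaluation_evaluation'']; monoidal

/-- The mate of a morphism with respect to a pair of exact pairings. -/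
noncomputable def pmate (P : D) {Q : D} (P' : D) {Q' : D} [ExactPairing P Q]
    [ExactPairing P' Q'] (u : Q ⟶ Q') : P' ⟶ P :=
  (λ_ P').inv ≫ (η_ P Q ▷ P') ≫ (α_ P Q P').hom ≫ (P ◁ ((u ▷ P') ≫ ε_ P' Q')) ≫ (ρ_ P).hom

theorem pmate_ev [ExactPairing P Q] [ExactPairing P' Q'] (u : Q ⟶ Q') :
    (Q ◁ pmate P P' u) ≫ ε_ P Q = (u ▷ P') ≫ ε_ P' Q' := by
  dsimp only [pmate]
  calc
    _ = 𝟙 _ ⊗≫ Q ◁ η_ P Q ▷ P' ⊗≫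
          (((Q ⊗ P : D)) ◁ ((u ▷ P') ≫ ε_ P' Q') ≫ ε_ P Q ▷ 𝟙_ D) ⊗≫ 𝟙 _ := by
      monoidal
    _ = 𝟙 _ ⊗≫ (Q ◁ η_ P Q ⊗≫ ε_ P Q ▷ Q) ▷ P' ⊗≫ ((u ▷ P') ≫ ε_ P' Q') := by
      rw [whisker_exchange]; monoidal
    _ = _ := by
      rw [coevaluation_evaluation'']; monoidal

theorem coev_transfer [ExactPairing P Q] [ExactPairing P' Q'] {v : P' ⟶ P} {u : Q ⟶ Q'}
    (hv : (Q ◁ v) ≫ ε_ P Q = (u ▷ P') ≫ ε_ P' Q') :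
    η_ P' Q' ≫ (v ▷ Q') = η_ P Q ≫ (P ◁ u) := by
  have hv' : v = (λ_ P').inv ≫ (η_ P Q ▷ P') ≫ (α_ P Q P').hom ≫
      (P ◁ ((u ▷ P') ≫ ε_ P' Q')) ≫ (ρ_ P).hom := by
    rw [← hv]
    exact ((evEquiv P P').left_inv v).symm
  rw [hv']
  calc
    _ = 𝟙 _ ⊗≫ (𝟙_ D ◁ η_ P' Q' ≫ η_ P Q ▷ ((P' ⊗ Q' : D))) ⊗≫
          P ◁ (u ▷ ((P' ⊗ Q' : D))) ⊗≫ P ◁ (ε_ P' Q' ▷ Q') ⊗≫ 𝟙 _ := by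
      monoidal
    _ = 𝟙 _ ⊗≫ η_ P Q ⊗≫ P ◁ (Q ◁ η_ P' Q' ≫ u ▷ ((P' ⊗ Q' : D))) ⊗≫
          P ◁ (ε_ P' Q' ▷ Q') ⊗≫ 𝟙 _ := by
      rw [whisker_exchange]; monoidal
    _ = 𝟙 _ ⊗≫ η_ P Q ⊗≫ P ◁ u ⊗≫ P ◁ (Q' ◁ η_ P' Q' ⊗≫ ε_ P' Q' ▷ Q') ⊗≫ 𝟙 _ := by
      rw [whisker_exchange]; monoidal
    _ = _ := by
      rw [coevaluation_evaluation'']; monoidal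

/-- Main abstract statement: dualizing an equalizer along exact pairings
gives a coequalizer. -/
theorem pairing_coequalizer [RigidCategory D] {Y Z Y' Z' : D}
    [ExactPairing Y' Y] [ExactPairing Z' Z]
    {f g : Y ⟶ Z} {f' g' : Z' ⟶ Y'}
    (hf : (Y ◁ f') ≫ ε_ Y' Y = (f ▷ Z') ≫ ε_ Z' Z)
    (hg : (Y ◁ g') ≫ ε_ Y' Y = (g ▷ Z') ≫ ε_ Z' Z)
    {E : D} (e : E ⟶ Y) (w : e ≫ f = e ≫ g) (hE : IsLimit (Fork.ofι e w))
    {π : Y' ⟶ (ᘁE : D)} (hπ : (E ◁ π) ≫ ε_ (ᘁE) E = (e ▷ Y') ≫ ε_ Y' Y) :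
    ∃ h : f' ≫ π = g' ≫ π, Nonempty (IsColimit (Cofork.ofπ π h)) := by
  have tf := coev_transfer hf
  have tg := coev_transfer hg
  have tπ := coev_transfer hπ
  have key : ∀ (u : Y ⟶ Z) (u' : Z' ⟶ Y'), η_ Z' Z ≫ (u' ▷ Z) = η_ Y' Y ≫ (Y' ◁ u) →
      η_ Z' Z ≫ ((u' ≫ π) ▷ Z) = η_ (ᘁE) E ≫ ((ᘁE : D) ◁ (e ≫ u)) := by
    intro u u' hu
    rw [comp_whiskerRight, ← Category.assoc, hu, Category.assoc, whisker_exchange,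
      ← Category.assoc, tπ, Category.assoc, ← MonoidalCategory.whiskerLeft_comp]
  have h : f' ≫ π = g' ≫ π := by
    apply (coevEquiv Z' (Q := Z) (ᘁE : D)).injective
    show η_ Z' Z ≫ ((f' ≫ π) ▷ Z) = η_ Z' Z ≫ ((g' ≫ π) ▷ Z)
    rw [key f f' tf, key g g' tg, w]
  refine ⟨h, ⟨Cofork.IsColimit.mk' _ fun s => ?_⟩⟩
  haveI : PreservesLimitsOfSize.{0, 0} (tensorLeft s.pt) :=
    (tensorLeftAdjunction s.pt (s.ptᘁ)).rightAdjoint_preservesLimits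
  have hsc : f' ≫ s.π = g' ≫ s.π := Cofork.condition s
  have hceq : (η_ Y' Y ≫ (s.π ▷ Y)) ≫ (tensorLeft s.pt).map f =
      (η_ Y' Y ≫ (s.π ▷ Y)) ≫ (tensorLeft s.pt).map g := by
    have hcf : ∀ (u : Y ⟶ Z) (u' : Z' ⟶ Y'), η_ Z' Z ≫ (u' ▷ Z) = η_ Y' Y ≫ (Y' ◁ u) →
        (η_ Y' Y ≫ (s.π ▷ Y)) ≫ (s.pt ◁ u) = η_ Z' Z ≫ ((u' ≫ s.π) ▷ Z) := by
      intro u u' hu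
      rw [comp_whiskerRight, ← Category.assoc, hu, Category.assoc, Category.assoc,
        whisker_exchange]
    show (η_ Y' Y ≫ (s.π ▷ Y)) ≫ (s.pt ◁ f) = (η_ Y' Y ≫ (s.π ▷ Y)) ≫ (s.pt ◁ g)
    rw [hcf f f' tf, hcf g g' tg, hsc]
  obtain ⟨b, hb⟩ := Fork.IsLimit.lift'
    (isLimitForkMapOfIsLimit (tensorLeft s.pt) w hE) _ hceq
  rw [Fork.ι_ofι] at hb
  -- `hb : b ≫ (tensorLeft s.pt).map e = η_ Y' Y ≫ (s.π ▷ Y)`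
  have hb' : b ≫ (s.pt ◁ e) = η_ Y' Y ≫ (s.π ▷ Y) := hb
  have hΘ : ∀ (d : (ᘁE : D) ⟶ s.pt), η_ Y' Y ≫ ((π ≫ d) ▷ Y) =
      η_ (ᘁE) E ≫ (d ▷ E) ≫ (s.pt ◁ e) := by
    intro d
    rw [comp_whiskerRight, ← Category.assoc, tπ, Category.assoc, whisker_exchange]
  refine ⟨(coevEquiv (ᘁE : D) s.pt).symm b, ?_, ?_⟩
  · apply (coevEquiv Y' (Q := Y) s.pt).injective
    show η_ Y' Y ≫ ((π ≫ (coevEquiv (ᘁE : D) s.pt).symm b) ▷ Y) = η_ Y' Y ≫ (s.π ▷ Y)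
    have hθ : η_ (ᘁE) E ≫ ((coevEquiv (ᘁE : D) s.pt).symm b ▷ E) = b :=
      (coevEquiv (ᘁE : D) s.pt).apply_symm_apply b
    rw [hΘ, ← Category.assoc, hθ, hb']
  · intro m hm
    have hm' : π ≫ m = s.π := hm
    apply (coevEquiv (ᘁE : D) (Q := E) s.pt).injective
    rw [Equiv.apply_symm_apply]
    apply Fork.IsLimit.hom_ext (isLimitForkMapOfIsLimit (tensorLeft s.pt) w hE)
    rw [Fork.ι_ofι]
    show (η_ (ᘁE) E ≫ (m ▷ E)) ≫ (s.pt ◁ e) = b ≫ ((s.pt : D) ◁ e)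
    rw [hb', Category.assoc, ← hΘ m, hm']

/-- The mate of a morphism in the other direction. -/
noncomputable def dmate (P Q P' Q' : D) [ExactPairing P Q] [ExactPairing P' Q']
    (v : P' ⟶ P) : Q ⟶ Q' :=
  (ρ_ Q).inv ≫ (Q ◁ η_ P' Q') ≫ (α_ Q P' Q').inv ≫
    (((Q ◁ v) ≫ ε_ P Q) ▷ Q') ≫ (λ_ Q').hom

theorem ev_dmate [ExactPairing P Q] [ExactPairing P' Q'] (v : P' ⟶ P) :
    (Q ◁ v) ≫ ε_ P Q = (dmate P Q P' Q' v ▷ P') ≫ ε_ P' Q' := by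
  symm
  dsimp only [dmate]
  calc
    _ = 𝟙 _ ⊗≫ Q ◁ (η_ P' Q' ▷ P') ⊗≫
          (((Q ◁ v) ≫ ε_ P Q) ▷ ((Q' ⊗ P' : D)) ≫ 𝟙_ D ◁ ε_ P' Q') ⊗≫ 𝟙 _ := by
      monoidal
    _ = 𝟙 _ ⊗≫ Q ◁ (η_ P' Q' ▷ P' ⊗≫ P' ◁ ε_ P' Q') ⊗≫ ((Q ◁ v) ≫ ε_ P Q) ⊗≫ 𝟙 _ := by
      rw [← whisker_exchange]; monoidal
    _ = _ := by
      rw [evaluation_coevaluation'']; monoidal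

theorem frame {P₁ Q₁ P₂ Q₂ P₂' Q₂' : D} [ExactPairing P₁ Q₁] [ExactPairing P₂ Q₂]
    [ExactPairing P₂' Q₂'] {v : P₂' ⟶ P₂} {u : Q₂ ⟶ Q₂'}
    (huv : (Q₂ ◁ v) ≫ ε_ P₂ Q₂ = (u ▷ P₂') ≫ ε_ P₂' Q₂') :
    ((Q₁ ⊗ Q₂) ◁ (v ▷ P₁)) ≫ (α_ Q₁ Q₂ (P₂ ⊗ P₁)).hom ≫
        (Q₁ ◁ ((α_ Q₂ P₂ P₁).inv ≫ (ε_ P₂ Q₂ ▷ P₁) ≫ (λ_ P₁).hom)) ≫ ε_ P₁ Q₁ =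
      ((Q₁ ◁ u) ▷ (P₂' ⊗ P₁)) ≫ (α_ Q₁ Q₂' (P₂' ⊗ P₁)).hom ≫
        (Q₁ ◁ ((α_ Q₂' P₂' P₁).inv ≫ (ε_ P₂' Q₂' ▷ P₁) ≫ (λ_ P₁).hom)) ≫ ε_ P₁ Q₁ := by
  calc
    _ = 𝟙 _ ⊗≫ Q₁ ◁ (((Q₂ ◁ v) ≫ ε_ P₂ Q₂) ▷ P₁) ⊗≫ ε_ P₁ Q₁ := by
      monoidal
    _ = 𝟙 _ ⊗≫ Q₁ ◁ (((u ▷ P₂') ≫ ε_ P₂' Q₂') ▷ P₁) ⊗≫ ε_ P₁ Q₁ := by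
      rw [huv]
    _ = _ := by
      monoidal

end LDEAux

open LDEAux in
theorem C2core (M : RightMod A) :
    (M.Xᘁ ◁ M.act) ≫ ε_ M.X (M.Xᘁ) =
      (deltaDual M ▷ (M.X ⊗ A.X)) ≫ (α_ (A.Xᘁ) (M.Xᘁ) (M.X ⊗ A.X)).hom ≫
        (A.Xᘁ ◁ ((α_ (M.Xᘁ) M.X A.X).inv ≫ (ε_ M.X (M.Xᘁ) ▷ A.X) ≫ (λ_ A.X).hom)) ≫
        ε_ A.X (A.Xᘁ) := by
  letI pq : ExactPairing (M.X ⊗ A.X) (A.Xᘁ ⊗ M.Xᘁ) :=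
    LDEAux.tensorPairing A.X (A.Xᘁ) M.X (M.Xᘁ)
  show (M.Xᘁ ◁ M.act) ≫ ε_ M.X (M.Xᘁ) =
    (deltaDual M ▷ (M.X ⊗ A.X)) ≫ ε_ (M.X ⊗ A.X) (A.Xᘁ ⊗ M.Xᘁ)
  have h2 : dmate M.X (M.Xᘁ) (M.X ⊗ A.X) (A.Xᘁ ⊗ M.Xᘁ) M.act = deltaDual M := by
    dsimp only [dmate, deltaDual]
    rw [show (η_ (M.X ⊗ A.X) (A.Xᘁ ⊗ M.Xᘁ)) = η_ M.X (M.Xᘁ) ≫ (M.X ◁ (λ_ (M.Xᘁ)).inv) ≫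
      (M.X ◁ (η_ A.X (A.Xᘁ) ▷ M.Xᘁ)) ≫ (M.X ◁ (α_ A.X (A.Xᘁ) (M.Xᘁ)).hom) ≫
      (α_ M.X A.X ((A.Xᘁ) ⊗ M.Xᘁ)).inv from rfl,
      show (ε_ M.X (M.Xᘁ)) = ExactPairing.evaluation M.X (M.Xᘁ) from rfl]
    monoidal
  rw [← h2]
  exact ev_dmate M.act

open LDEAux in
theorem C1core (N : RightMod A) :
    (N.X ◁ leftActOnLeftDual N) ≫ ε_ ((ᘁN.X : C)) N.X =
      (deltaAct N ▷ ((A.X ⊗ (ᘁN.X : C)))) ≫ (α_ N.X (A.Xᘁ) (A.X ⊗ (ᘁN.X : C))).hom ≫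
        (N.X ◁ ((α_ (A.Xᘁ) A.X (ᘁN.X : C)).inv ≫ (ε_ A.X (A.Xᘁ) ▷ (ᘁN.X : C)) ≫
          (λ_ (ᘁN.X : C)).hom)) ≫ ε_ ((ᘁN.X : C)) N.X := by
  have hT : (deltaAct N ▷ ((A.X ⊗ (ᘁN.X : C)))) ≫
      (α_ N.X (A.Xᘁ) (A.X ⊗ (ᘁN.X : C))).hom ≫
      (N.X ◁ ((α_ (A.Xᘁ) A.X (ᘁN.X : C)).inv ≫ (ε_ A.X (A.Xᘁ) ▷ (ᘁN.X : C)) ≫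
        (λ_ (ᘁN.X : C)).hom)) ≫ ε_ ((ᘁN.X : C)) N.X =
      (α_ N.X A.X (ᘁN.X : C)).inv ≫ (N.act ▷ (ᘁN.X : C)) ≫ ε_ ((ᘁN.X : C)) N.X := by
    dsimp only [deltaAct]
    calc
      _ = 𝟙 _ ⊗≫ N.X ◁ (η_ A.X (A.Xᘁ) ▷ ((A.X ⊗ (ᘁN.X : C)) : C)) ⊗≫
            (N.act ▷ ((A.Xᘁ ⊗ (A.X ⊗ (ᘁN.X : C))) : C) ≫
              N.X ◁ ((α_ (A.Xᘁ) A.X (ᘁN.X : C)).inv ≫ (ε_ A.X (A.Xᘁ) ▷ (ᘁN.X : C)) ≫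
                (λ_ (ᘁN.X : C)).hom)) ⊗≫ ε_ ((ᘁN.X : C)) N.X := by
        monoidal
      _ = 𝟙 _ ⊗≫ N.X ◁ (η_ A.X (A.Xᘁ) ▷ ((A.X ⊗ (ᘁN.X : C)) : C)) ⊗≫
            ((N.X ⊗ A.X : C) ◁ ((α_ (A.Xᘁ) A.X (ᘁN.X : C)).inv ≫
              (ε_ A.X (A.Xᘁ) ▷ (ᘁN.X : C)) ≫ (λ_ (ᘁN.X : C)).hom) ≫
              N.act ▷ (ᘁN.X : C)) ⊗≫ ε_ ((ᘁN.X : C)) N.X := by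
        rw [← whisker_exchange]
      _ = 𝟙 _ ⊗≫ N.X ◁ ((η_ A.X (A.Xᘁ) ▷ A.X ⊗≫ A.X ◁ ε_ A.X (A.Xᘁ)) ▷ (ᘁN.X : C)) ⊗≫
            (N.act ▷ (ᘁN.X : C) ≫ ε_ ((ᘁN.X : C)) N.X) := by
        monoidal
      _ = _ := by
        rw [ExactPairing.evaluation_coevaluation'']; monoidal
  rw [hT]
  dsimp only [leftActOnLeftDual]
  calc
    _ = 𝟙 _ ⊗≫ N.X ◁ (η_ ((ᘁN.X : C)) N.X ▷ ((A.X ⊗ (ᘁN.X : C)) : C)) ⊗≫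
          N.X ◁ ((ᘁN.X : C) ◁ ((α_ N.X A.X (ᘁN.X : C)).inv ≫ N.act ▷ (ᘁN.X : C))) ⊗≫
          (((N.X ⊗ (ᘁN.X : C)) : C) ◁ ε_ ((ᘁN.X : C)) N.X ≫ ε_ ((ᘁN.X : C)) N.X ▷ (𝟙_ C)) ⊗≫ 𝟙 _ := by
      monoidal
    _ = 𝟙 _ ⊗≫ N.X ◁ (η_ ((ᘁN.X : C)) N.X ▷ ((A.X ⊗ (ᘁN.X : C)) : C)) ⊗≫
          (((N.X ⊗ (ᘁN.X : C)) : C) ◁ ((α_ N.X A.X (ᘁN.X : C)).inv ≫ N.act ▷ (ᘁN.X : C)) ≫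
            ε_ ((ᘁN.X : C)) N.X ▷ ((N.X ⊗ (ᘁN.X : C)) : C)) ⊗≫ ε_ ((ᘁN.X : C)) N.X := by
      rw [whisker_exchange]; monoidal
    _ = 𝟙 _ ⊗≫ (N.X ◁ η_ ((ᘁN.X : C)) N.X ⊗≫ ε_ ((ᘁN.X : C)) N.X ▷ N.X) ▷ ((A.X ⊗ (ᘁN.X : C)) : C) ⊗≫
          ((α_ N.X A.X (ᘁN.X : C)).inv ≫ N.act ▷ (ᘁN.X : C) ≫ ε_ ((ᘁN.X : C)) N.X) := by
      rw [whisker_exchange]; monoidal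
    _ = _ := by
      rw [ExactPairing.coevaluation_evaluation'']; monoidal


open LDEAux in
theorem hg_full (M N : RightMod A) :
    ((N.X ⊗ M.Xᘁ) ◁ (M.act ▷ (ᘁN.X : C))) ≫ pairEval M N =
      ((N.X ◁ deltaDual M) ▷ ((M.X ⊗ A.X) ⊗ (ᘁN.X : C))) ≫
        ((α_ N.X (A.Xᘁ ⊗ M.Xᘁ) ((M.X ⊗ A.X) ⊗ (ᘁN.X : C))).hom ≫
          (N.X ◁ ((α_ (A.Xᘁ ⊗ M.Xᘁ) (M.X ⊗ A.X) (ᘁN.X : C)).inv ≫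
            (((α_ (A.Xᘁ) (M.Xᘁ) (M.X ⊗ A.X)).hom ≫
              (A.Xᘁ ◁ ((α_ (M.Xᘁ) M.X A.X).inv ≫ (ε_ M.X (M.Xᘁ) ▷ A.X) ≫ (λ_ A.X).hom)) ≫
              ε_ A.X (A.Xᘁ)) ▷ (ᘁN.X : C)) ≫ (λ_ (ᘁN.X : C)).hom)) ≫ ε_ ((ᘁN.X : C)) N.X) := by
  letI pq : ExactPairing (M.X ⊗ A.X) (A.Xᘁ ⊗ M.Xᘁ) :=
    LDEAux.tensorPairing A.X (A.Xᘁ) M.X (M.Xᘁ)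
  exact LDEAux.frame (C2core M)

open LDEAux in
theorem hf_full (M N : RightMod A) :
    ((N.X ⊗ M.Xᘁ) ◁ ((α_ M.X A.X (ᘁN.X : C)).hom ≫ (M.X ◁ leftActOnLeftDual N))) ≫
        pairEval M N =
      (((deltaAct N ▷ M.Xᘁ) ≫ (α_ N.X (A.Xᘁ) (M.Xᘁ)).hom) ▷ ((M.X ⊗ A.X) ⊗ (ᘁN.X : C))) ≫
        ((α_ N.X (A.Xᘁ ⊗ M.Xᘁ) ((M.X ⊗ A.X) ⊗ (ᘁN.X : C))).hom ≫
          (N.X ◁ ((α_ (A.Xᘁ ⊗ M.Xᘁ) (M.X ⊗ A.X) (ᘁN.X : C)).inv ≫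
            (((α_ (A.Xᘁ) (M.Xᘁ) (M.X ⊗ A.X)).hom ≫
              (A.Xᘁ ◁ ((α_ (M.Xᘁ) M.X A.X).inv ≫ (ε_ M.X (M.Xᘁ) ▷ A.X) ≫ (λ_ A.X).hom)) ≫
              ε_ A.X (A.Xᘁ)) ▷ (ᘁN.X : C)) ≫ (λ_ (ᘁN.X : C)).hom)) ≫ ε_ ((ᘁN.X : C)) N.X) := by
  dsimp only [pairEval]
  calc
    _ = 𝟙 _ ⊗≫ N.X ◁ (((M.Xᘁ ⊗ M.X : C)) ◁ leftActOnLeftDual N ≫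
          ε_ M.X (M.Xᘁ) ▷ (ᘁN.X : C)) ⊗≫ ε_ ((ᘁN.X : C)) N.X := by
      monoidal
    _ = 𝟙 _ ⊗≫ N.X ◁ (ε_ M.X (M.Xᘁ) ▷ ((A.X ⊗ (ᘁN.X : C)) : C) ≫
          𝟙_ C ◁ leftActOnLeftDual N) ⊗≫ ε_ ((ᘁN.X : C)) N.X := by
      rw [whisker_exchange]
    _ = 𝟙 _ ⊗≫ N.X ◁ (ε_ M.X (M.Xᘁ) ▷ ((A.X ⊗ (ᘁN.X : C)) : C)) ⊗≫
          ((N.X ◁ leftActOnLeftDual N) ≫ ε_ ((ᘁN.X : C)) N.X) := by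
      monoidal
    _ = 𝟙 _ ⊗≫ N.X ◁ (ε_ M.X (M.Xᘁ) ▷ ((A.X ⊗ (ᘁN.X : C)) : C)) ⊗≫
          ((deltaAct N ▷ ((A.X ⊗ (ᘁN.X : C)))) ≫ (α_ N.X (A.Xᘁ) (A.X ⊗ (ᘁN.X : C))).hom ≫
            (N.X ◁ ((α_ (A.Xᘁ) A.X (ᘁN.X : C)).inv ≫ (ε_ A.X (A.Xᘁ) ▷ (ᘁN.X : C)) ≫
              (λ_ (ᘁN.X : C)).hom)) ≫ ε_ ((ᘁN.X : C)) N.X) := by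
      rw [C1core N]
    _ = 𝟙 _ ⊗≫ (N.X ◁ (ε_ M.X (M.Xᘁ) ▷ ((A.X ⊗ (ᘁN.X : C)) : C)) ≫
            deltaAct N ▷ ((𝟙_ C ⊗ (A.X ⊗ (ᘁN.X : C))) : C)) ⊗≫
          (N.X ◁ ((α_ (A.Xᘁ) A.X (ᘁN.X : C)).inv ≫ (ε_ A.X (A.Xᘁ) ▷ (ᘁN.X : C)) ≫
            (λ_ (ᘁN.X : C)).hom)) ⊗≫ ε_ ((ᘁN.X : C)) N.X := by
      monoidal
    _ = _ := by
      rw [whisker_exchange]; monoidal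

/-- `ᘁE`, with the canonical map `M ⊗ ᘁN ⟶ ᘁE`, is a coequalizer of
`id_M ⊗ ▷_N` and `act_M ⊗ id_{ᘁN} : (M ⊗ A) ⊗ ᘁN ⟶ M ⊗ ᘁN`. -/

theorem leftDual_equalizer_isCoequalizer (M N : RightMod A)
    (E : C) (e : E ⟶ N.X ⊗ M.Xᘁ)
    (w : e ≫ ((deltaAct N ▷ M.Xᘁ) ≫ (α_ N.X (A.Xᘁ) (M.Xᘁ)).hom) =
      e ≫ (N.X ◁ deltaDual M))
    (hE : IsLimit (Fork.ofι e w)) :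
    ∃ (h : ((α_ M.X A.X (ᘁN.X : C)).hom ≫ (M.X ◁ leftActOnLeftDual N)) ≫
            coforkMap M N e =
          (M.act ▷ (ᘁN.X : C)) ≫ coforkMap M N e),
      Nonempty (IsColimit (Cofork.ofπ (coforkMap M N e) h)) := by
  letI pq : ExactPairing (M.X ⊗ A.X) (A.Xᘁ ⊗ M.Xᘁ) :=
    LDEAux.tensorPairing A.X (A.Xᘁ) M.X (M.Xᘁ)
  letI pZ : ExactPairing ((M.X ⊗ A.X) ⊗ (ᘁN.X : C)) (N.X ⊗ (A.Xᘁ ⊗ M.Xᘁ)) :=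
    LDEAux.tensorPairing (ᘁN.X : C) N.X (M.X ⊗ A.X) (A.Xᘁ ⊗ M.Xᘁ)
  letI pY : ExactPairing (M.X ⊗ (ᘁN.X : C)) (N.X ⊗ M.Xᘁ) :=
    LDEAux.tensorPairing (ᘁN.X : C) N.X M.X (M.Xᘁ)
  have hπ : (E ◁ coforkMap M N e) ≫ ε_ (ᘁE) E =
      (e ▷ (M.X ⊗ (ᘁN.X : C))) ≫ ε_ (M.X ⊗ (ᘁN.X : C)) (N.X ⊗ M.Xᘁ) := by
    have h1 : coforkMap M N e = LDEAux.pmate (ᘁE : C) (M.X ⊗ (ᘁN.X : C)) e := rfl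
    rw [h1]
    exact LDEAux.pmate_ev e
  exact LDEAux.pairing_coequalizer (hf_full M N) (hg_full M N) e w hE hπ
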